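/- arXiv:2110.13439 — 2 statements merged into one kernel-verified Lean document; each statement's English description precedes it below -/
import Mathlib

section
/- For every a ∈ [0, π] and every r ∈ [0, 1], the point e^{ira} on the unit circle and the corresponding point (1−r) + r·e^{ia} on the chord joining 1 to e^{ia} satisfy |e^{ira} − ((1−r) + r·e^{ia})| ≤ 1 − cos(a/2) ≤ a²/8. -/
open Real

/-- `1 - cos y ≤ y^2 / 2` for `0 ≤ y`. -/
lemma one_sub_cos_le_half_sq' {y : ℝ} (hy : 0 ≤ y) : 1 - Real.cos y ≤ y ^ 2 / 2 := by
  have h1 : Real.cos y = 1 - 2 * Real.sin (y / 2) ^ 2 := by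
    have h := Real.cos_two_mul (y / 2)
    have hp := Real.sin_sq_add_cos_sq (y / 2)
    have : (2 : ℝ) * (y / 2) = y := by ring
    rw [this] at h
    nlinarith
  have h2 : Real.sin (y / 2) ≤ y / 2 := Real.sin_le (by linarith)
  have h3 : -(y / 2) ≤ Real.sin (y / 2) := by
    rcases le_or_gt 1 (y / 2) with h | h
    · linarith [Real.neg_one_le_sin (y / 2)]
    · have : 0 ≤ Real.sin (y / 2) :=
        Real.sin_nonneg_of_nonneg_of_le_pi (by linarith) (by linarith [Real.pi_gt_three])
      linarith
  nlinarith

/-- `s^2 * cos s ≤ sin s ^ 2` on `[0, π/2]`. -/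
lemma sq_mul_cos_le_sin_sq {s : ℝ} (hs0 : 0 ≤ s) (hs : s ≤ π / 2) :
    s ^ 2 * Real.cos s ≤ Real.sin s ^ 2 := by
  rcases eq_or_lt_of_le hs0 with h | h
  · simp [← h]
  have hhalf : s / 2 * Real.cos (s / 2) ≤ Real.sin (s / 2) := by
    have h1 : s / 2 < π / 2 := by linarith [Real.pi_pos]
    have h2 : 0 < s / 2 := by linarith
    have := Real.lt_tan h2 h1
    have hc : 0 < Real.cos (s / 2) := Real.cos_pos_of_mem_Ioo ⟨by linarith [Real.pi_pos], h1⟩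
    rw [Real.tan_eq_sin_div_cos] at this
    calc s / 2 * Real.cos (s / 2) ≤ Real.sin (s / 2) / Real.cos (s / 2) * Real.cos (s / 2) := by
          nlinarith
      _ = Real.sin (s / 2) := by field_simp
  have hsin : Real.sin s = 2 * Real.sin (s / 2) * Real.cos (s / 2) := by
    rw [← Real.sin_two_mul]; ring_nf
  have hcos : Real.cos s = 2 * Real.cos (s / 2) ^ 2 - 1 := by
    rw [← Real.cos_two_mul]; ring_nf
  have hc0 : 0 ≤ Real.cos (s / 2) := by
    apply Real.cos_nonneg_of_mem_Icc; constructor <;> [linarith [Real.pi_pos]; linarith]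
  -- sin s ≥ s * cos(s/2)^2 ≥ 0, so sin² s ≥ s² cos⁴(s/2) ≥ s² cos s  since cos⁴ ≥ 2cos²−1
  have key1 : s * Real.cos (s / 2) ^ 2 ≤ Real.sin s := by rw [hsin]; nlinarith
  have key2 : Real.cos s ≤ (Real.cos (s / 2) ^ 2) ^ 2 := by
    rw [hcos]; nlinarith [sq_nonneg (Real.cos (s / 2) ^ 2 - 1)]
  nlinarith [sq_nonneg s, mul_nonneg (mul_nonneg hs0 hc0) hc0]

/-- Key scalar inequality, nonnegative `t` case. -/
lemma key_ineq_nonneg {s t : ℝ} (hs0 : 0 ≤ s) (hs : s ≤ π / 2) (ht0 : 0 ≤ t) (ht1 : t ≤ 1) :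
    t ^ 2 * Real.sin s ^ 2 ≤
      2 * Real.cos s * (Real.cos (t * s) - 1) + 2 * t * Real.sin (t * s) * Real.sin s := by
  have hconc : t * Real.sin s ≤ Real.sin (t * s) := by
    have h := strictConcaveOn_sin_Icc.concaveOn.2
      (Set.mem_Icc.mpr ⟨le_rfl, Real.pi_pos.le⟩)
      (Set.mem_Icc.mpr ⟨hs0, by linarith [Real.pi_pos]⟩)
      (show (0:ℝ) ≤ 1 - t by linarith) (show (0:ℝ) ≤ t from ht0)
      (show (1 - t) + t = 1 by ring)
    simpa [smul_eq_mul] using h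
  have h2 : 1 - Real.cos (t * s) ≤ (t * s) ^ 2 / 2 :=
    one_sub_cos_le_half_sq' (mul_nonneg ht0 hs0)
  have h3 : s ^ 2 * Real.cos s ≤ Real.sin s ^ 2 := sq_mul_cos_le_sin_sq hs0 hs
  have hcosnn : 0 ≤ Real.cos s := Real.cos_nonneg_of_mem_Icc ⟨by linarith [Real.pi_pos], hs⟩
  have hsinnn : 0 ≤ Real.sin s := Real.sin_nonneg_of_nonneg_of_le_pi hs0 (by linarith [Real.pi_pos])
  nlinarith [mul_nonneg ht0 hsinnn, mul_nonneg (mul_nonneg ht0 ht0) hcosnn,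
    mul_le_mul_of_nonneg_left hconc (mul_nonneg (by linarith : (0:ℝ) ≤ 2*t) hsinnn),
    mul_le_mul_of_nonneg_left h2 (mul_nonneg (by norm_num : (0:ℝ) ≤ 2) hcosnn),
    mul_le_mul_of_nonneg_left h3 (sq_nonneg t)]

/-- Key scalar inequality, general `t ∈ [-1,1]`. -/
lemma key_ineq {s t : ℝ} (hs0 : 0 ≤ s) (hs : s ≤ π / 2) (ht0 : -1 ≤ t) (ht1 : t ≤ 1) :
    t ^ 2 * Real.sin s ^ 2 ≤
      2 * Real.cos s * (Real.cos (t * s) - 1) + 2 * t * Real.sin (t * s) * Real.sin s := by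
  rcases le_or_gt 0 t with h | h
  · exact key_ineq_nonneg hs0 hs h ht1
  · have := key_ineq_nonneg hs0 hs (by linarith : (0:ℝ) ≤ -t) (by linarith)
    rw [show -t * s = -(t * s) by ring, Real.cos_neg, Real.sin_neg] at this
    nlinarith [this]

theorem chord_vs_arc_distance (a r : ℝ) (ha : a ∈ Set.Icc 0 Real.pi)
    (hr : r ∈ Set.Icc (0 : ℝ) 1) :
    ‖(Complex.exp (Complex.I * (r : ℂ) * (a : ℂ)) -
        (((1 - r : ℝ) : ℂ) + (r : ℂ) * Complex.exp (Complex.I * (a : ℂ))))‖ ≤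
      1 - Real.cos (a / 2) ∧
    1 - Real.cos (a / 2) ≤ a ^ 2 / 8 := by
  obtain ⟨ha0, hapi⟩ := ha
  obtain ⟨hr0, hr1⟩ := hr
  constructor
  · -- main inequality
    set X : ℝ := Real.cos (r * a) - (1 - r) - r * Real.cos a with hX
    set Y : ℝ := Real.sin (r * a) - r * Real.sin a with hY
    have hrw : Complex.exp (Complex.I * (r : ℂ) * (a : ℂ)) -
        (((1 - r : ℝ) : ℂ) + (r : ℂ) * Complex.exp (Complex.I * (a : ℂ)))
        = (X : ℂ) + (Y : ℂ) * Complex.I := by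
      have e1 : Complex.I * (r : ℂ) * (a : ℂ) = ((r * a : ℝ) : ℂ) * Complex.I := by
        push_cast; ring
      have e2 : Complex.I * (a : ℂ) = ((a : ℝ) : ℂ) * Complex.I := by ring
      rw [e1, e2, Complex.exp_mul_I, Complex.exp_mul_I, ← Complex.ofReal_cos,
        ← Complex.ofReal_sin, ← Complex.ofReal_cos, ← Complex.ofReal_sin, hX, hY]
      push_cast; ring
    rw [hrw, Complex.norm_add_mul_I]
    have hc1 : Real.cos (a / 2) ≤ 1 := Real.cos_le_one _
    have hXY : X ^ 2 + Y ^ 2 ≤ (1 - Real.cos (a / 2)) ^ 2 := by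
      set s : ℝ := a / 2 with hsdef
      set t : ℝ := 2 * r - 1 with htdef
      have hs0 : 0 ≤ s := by simp only [hsdef]; linarith
      have hspi : s ≤ π / 2 := by simp only [hsdef]; linarith
      have hts : r * a = t * s + s := by simp only [hsdef, htdef]; ring
      have has : a = s + s := by simp only [hsdef]; ring
      have e3 : Real.cos (r * a) = Real.cos (t * s) * Real.cos s - Real.sin (t * s) * Real.sin s := by
        rw [hts, Real.cos_add]
      have e4 : Real.sin (r * a) = Real.sin (t * s) * Real.cos s + Real.cos (t * s) * Real.sin s := by
        rw [hts, Real.sin_add]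
      have e5 : Real.cos a = Real.cos s * Real.cos s - Real.sin s * Real.sin s := by
        rw [has, Real.cos_add]
      have e6 : Real.sin a = Real.sin s * Real.cos s + Real.cos s * Real.sin s := by
        rw [has, Real.sin_add]
      have p1 : Real.sin s ^ 2 + Real.cos s ^ 2 = 1 := Real.sin_sq_add_cos_sq s
      have p2 : Real.sin (t * s) ^ 2 + Real.cos (t * s) ^ 2 = 1 := Real.sin_sq_add_cos_sq (t * s)
      have hkey := key_ineq (t := t) hs0 hspi (by simp only [htdef]; linarith)
        (by simp only [htdef]; linarith)
      have hrt : r = (t + 1) / 2 := by simp only [htdef]; ring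
      have hid : X ^ 2 + Y ^ 2 = (1 - Real.cos s) ^ 2 -
          (2 * Real.cos s * (Real.cos (t * s) - 1) + 2 * t * Real.sin (t * s) * Real.sin s
            - t ^ 2 * Real.sin s ^ 2) := by
        rw [hX, hY, e3, e4, e5, e6, hrt]
        linear_combination (-1/4 + 1/2*t - 1/4*t^2 + 1/4*Real.sin s^2 + 1/2*Real.sin s^2*t
          + 1/4*Real.sin s^2*t^2 + 1/4*Real.cos s^2 + 1/2*Real.cos s^2*t + 1/4*Real.cos s^2*t^2
          - Real.sin (t*s)*Real.sin s - Real.sin (t*s)*Real.sin s*t + Real.sin (t*s)^2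
          - Real.cos (t*s)*Real.cos s - Real.cos (t*s)*Real.cos s*t + Real.cos (t*s)^2) * p1 + p2
      linarith [hid, hkey]
    have h0 : (0:ℝ) ≤ 1 - Real.cos (a / 2) := by linarith
    calc Real.sqrt (X ^ 2 + Y ^ 2) ≤ Real.sqrt ((1 - Real.cos (a / 2)) ^ 2) :=
          Real.sqrt_le_sqrt hXY
      _ = 1 - Real.cos (a / 2) := by rw [Real.sqrt_sq h0]
  · have := one_sub_cos_le_half_sq' (y := a / 2) (by linarith)
    calc 1 - Real.cos (a / 2) ≤ (a / 2) ^ 2 / 2 := this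
      _ = a ^ 2 / 8 := by ring
end

section
/- (Randomized rounding of phases.) Let θ ∈ ℝ and let b be an integer with b ≥ 1. Then the randomized b-bit rounding Θ^{(b)} of θ is unbiased, E[Θ^{(b)}] = (1 − r(θ,b))·φ₀(θ,b) + r(θ,b)·(φ₀(θ,b) + 2^{−b}) = θ, and its expected phase satisfies |e^{2πiθ} − E[e^{2πiΘ^{(b)}}]| ≤ 1 − cos(π·2^{−b}) ≤ π²·2^{−(2b+1)}. Consequently, for any ε with 0 < ε ≤ π²/8, choosing b = ⌈(1/2)·log₂(π²/(2ε))⌉ gives |e^{2πiθ} − E[e^{2πiΘ^{(b)}}]| ≤ ε. -/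
open Real

/-- The `b`-bit truncation `φ₀(θ,b) = 2^{−b}·⌊2^b·θ⌋`. -/
noncomputable def phi0 (θ : ℝ) (b : ℕ) : ℝ :=
  (2 : ℝ) ^ (-(b : ℤ)) * (⌊(2 : ℝ) ^ b * θ⌋ : ℝ)

/-- The fractional remainder `r(θ,b) = 2^b·θ − ⌊2^b·θ⌋ ∈ [0,1)`. -/
noncomputable def rfrac (θ : ℝ) (b : ℕ) : ℝ :=
  (2 : ℝ) ^ b * θ - (⌊(2 : ℝ) ^ b * θ⌋ : ℝ)

/-- The complex phase `e^{2πiθ}`. -/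
noncomputable def phase (θ : ℝ) : ℂ :=
  Complex.exp (2 * Real.pi * Complex.I * (θ : ℂ))

/-- The expected phase `E[e^{2πiΘ^{(b)}}]` of the randomized `b`-bit rounding
`Θ^{(b)}` of `θ`, which takes the value `φ₀(θ,b)` with probability `1 − r(θ,b)`
and the value `φ₀(θ,b) + 2^{−b}` with probability `r(θ,b)`. -/
noncomputable def expPhase (θ : ℝ) (b : ℕ) : ℂ :=
  ((1 - rfrac θ b : ℝ) : ℂ) * phase (phi0 θ b) +
    ((rfrac θ b : ℝ) : ℂ) * phase (phi0 θ b + (2 : ℝ) ^ (-(b : ℤ)))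

/- ### Auxiliary lemmas -/

lemma aux_ycos (y : ℝ) (hy0 : 0 ≤ y) (hy : y ≤ π/4) : y * Real.cos y ≤ Real.sin y := by
  rcases eq_or_lt_of_le hy0 with h|h
  · simp [← h]
  · have hlt : y < π/2 := by nlinarith [Real.pi_pos]
    have ht := Real.lt_tan h hlt
    have hc : 0 < Real.cos y := Real.cos_pos_of_mem_Ioo ⟨by linarith, hlt⟩
    rw [Real.tan_eq_sin_div_cos] at ht
    have := mul_lt_mul_of_pos_right ht hc
    rw [div_mul_cancel₀ _ (ne_of_gt hc)] at this
    linarith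

lemma aux_b2 (x y : ℝ) (hy0 : 0 ≤ y) (hy : y ≤ π/4) :
    y * (Real.cos x - Real.sin y) ≤ Real.sin y * Real.cos y := by
  have b1 := aux_ycos y hy0 hy
  have hc : 0 ≤ Real.cos y :=
    Real.cos_nonneg_of_mem_Icc ⟨by linarith [Real.pi_pos], by linarith [Real.pi_pos]⟩
  have hs : 0 ≤ Real.sin y := Real.sin_nonneg_of_nonneg_of_le_pi hy0 (by linarith [Real.pi_pos])
  have hs1 : Real.sin y ≤ 1 := Real.sin_le_one y
  have hcx : Real.cos x ≤ 1 := Real.cos_le_one x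
  have hpyth := Real.sin_sq_add_cos_sq y
  nlinarith [mul_le_mul_of_nonneg_right b1 hc, mul_nonneg (mul_nonneg hy0 hs) (sub_nonneg.2 hs1),
    mul_le_mul_of_nonneg_left hcx hy0]

lemma aux_b3 (x y : ℝ) (hx0 : 0 ≤ x) (hxπ : x ≤ π) (hy0 : 0 ≤ y) (hy : y ≤ π/4) :
    y * Real.sin x * (Real.cos x - Real.sin y) ≤ x * (Real.sin y * Real.cos y) := by
  have hc : 0 ≤ Real.cos y :=
    Real.cos_nonneg_of_mem_Icc ⟨by linarith [Real.pi_pos], by linarith [Real.pi_pos]⟩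
  have hs : 0 ≤ Real.sin y := Real.sin_nonneg_of_nonneg_of_le_pi hy0 (by linarith [Real.pi_pos])
  have hsx : Real.sin x ≤ x := Real.sin_le hx0
  have hsx0 : 0 ≤ Real.sin x := Real.sin_nonneg_of_nonneg_of_le_pi hx0 hxπ
  rcases le_or_gt (Real.cos x) (Real.sin y) with h|h
  · have h1 : y * Real.sin x * (Real.cos x - Real.sin y) ≤ 0 :=
      mul_nonpos_of_nonneg_of_nonpos (mul_nonneg hy0 hsx0) (by linarith)
    exact le_trans h1 (by positivity)
  · have b2 := aux_b2 x y hy0 hy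
    calc y * Real.sin x * (Real.cos x - Real.sin y)
        = Real.sin x * (y * (Real.cos x - Real.sin y)) := by ring
      _ ≤ Real.sin x * (Real.sin y * Real.cos y) := by
          apply mul_le_mul_of_nonneg_left b2 hsx0
      _ ≤ x * (Real.sin y * Real.cos y) := by
          apply mul_le_mul_of_nonneg_right hsx (by positivity)

/-- Core inequality, `t ∈ [0,1]` case. -/
lemma aux_K1 (β t : ℝ) (hβ0 : 0 ≤ β) (hβ : β ≤ π/2) (ht0 : 0 ≤ t) (ht1 : t ≤ 1) :
    (Real.cos (t*β) - Real.cos β)^2 + (Real.sin (t*β) - t*Real.sin β)^2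
      ≤ (1 - Real.cos β)^2 := by
  have hπ := Real.pi_pos
  have hβπ : β ≤ π := by linarith
  -- concavity: t * sin β ≤ sin (t*β)
  have hA : t * Real.sin β ≤ Real.sin (t*β) := by
    have hconc := strictConcaveOn_sin_Icc.concaveOn
    have h := hconc.2 (x := β) ⟨hβ0, hβπ⟩ (y := 0) ⟨le_refl 0, le_of_lt hπ⟩
      ht0 (by linarith : (0:ℝ) ≤ 1 - t) (by ring)
    simpa using h
  rcases eq_or_lt_of_le hβ0 with hb0|hβpos
  · rw [← hb0]; simp
  -- step B
  have hB : Real.sin (t*β) - t * Real.sin β ≤ 2 * Real.sin (t*β/2) * Real.sin (β/2) := by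
    set x := t*β/2 with hxdef
    set y := β/2 with hydef
    have hx0 : 0 ≤ x := by positivity
    have hy0 : 0 < y := by positivity
    have hyπ : y ≤ π/4 := by rw [hydef]; linarith
    have hxπ : x ≤ π := by rw [hxdef]; nlinarith
    have b3 := aux_b3 x y hx0 hxπ hy0.le hyπ
    have hty : t * y = x := by rw [hxdef, hydef]; ring
    have e1 : t*β = 2*x := by rw [hxdef]; ring
    have e2 : β = 2*y := by rw [hydef]; ring
    rw [e1, e2, Real.sin_two_mul, Real.sin_two_mul]
    have key : y * (2*Real.sin x*Real.cos x - t*(2*(Real.sin y*Real.cos y)))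
        ≤ y * (2*Real.sin x*Real.sin y) := by
      have expand : y * (2*Real.sin x*Real.cos x - t*(2*(Real.sin y*Real.cos y)))
          = 2*(y*Real.sin x*Real.cos x) - 2*(x*(Real.sin y*Real.cos y)) := by
        linear_combination (-2*(Real.sin y*Real.cos y)) * hty
      rw [expand]
      nlinarith [b3]
    have := le_of_mul_le_mul_left (by linarith [key] :
      y * (2*Real.sin x*Real.cos x - t*(2*(Real.sin y*Real.cos y))) ≤ y * (2*Real.sin x*Real.sin y)) hy0
    linarith
  -- step C
  have hu0 : 0 ≤ t*β := by positivity
  have huβ : t*β ≤ β := by nlinarith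
  have hC : Real.cos β ≤ Real.cos (t*β) := Real.cos_le_cos_of_nonneg_of_le_pi hu0 hβπ huβ
  -- half-angle identities
  have hcu : Real.cos (t*β) = 1 - 2*Real.sin (t*β/2)^2 := by
    have h := Real.cos_two_mul' (t*β/2)
    rw [show 2*(t*β/2) = t*β by ring] at h
    rw [h]; linear_combination Real.sin_sq_add_cos_sq (t*β/2)
  have hcb : Real.cos β = 1 - 2*Real.sin (β/2)^2 := by
    have h := Real.cos_two_mul' (β/2)
    rw [show 2*(β/2) = β by ring] at h
    rw [h]; linear_combination Real.sin_sq_add_cos_sq (β/2)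
  have hsq : (Real.sin (t*β) - t*Real.sin β)^2
      ≤ (1 - Real.cos (t*β)) * (1 - Real.cos β) := by
    have h0 : 0 ≤ Real.sin (t*β) - t*Real.sin β := by linarith
    have h1 : (Real.sin (t*β) - t*Real.sin β)^2 ≤ (2*Real.sin (t*β/2)*Real.sin (β/2))^2 :=
      pow_le_pow_left₀ h0 hB 2
    have h2 : (2*Real.sin (t*β/2)*Real.sin (β/2))^2
        = (1 - Real.cos (t*β)) * (1 - Real.cos β) := by
      rw [hcu, hcb]; ring
    linarith [h1, h2.le]
  have hm : (1 - Real.cos (t*β)) * (1 - Real.cos β)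
      ≤ (1 - Real.cos (t*β)) * (1 + Real.cos (t*β) - 2*Real.cos β) := by
    apply mul_le_mul_of_nonneg_left (by linarith) (by linarith [Real.cos_le_one (t*β)])
  nlinarith [hsq, hm]

/-- Core inequality, `|t| ≤ 1` case. -/
lemma aux_K2 (β t : ℝ) (hβ0 : 0 ≤ β) (hβ : β ≤ π/2) (ht : |t| ≤ 1) :
    (Real.cos (t*β) - Real.cos β)^2 + (Real.sin (t*β) - t*Real.sin β)^2
      ≤ (1 - Real.cos β)^2 := by
  rw [abs_le] at ht
  rcases le_or_gt 0 t with h|h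
  · exact aux_K1 β t hβ0 hβ h ht.2
  · have hK := aux_K1 β (-t) hβ0 hβ (by linarith) (by linarith)
    have e1 : Real.cos (-t*β) = Real.cos (t*β) := by
      rw [show -t*β = -(t*β) by ring, Real.cos_neg]
    have e2 : (Real.sin (-t*β) - (-t)*Real.sin β)^2
        = (Real.sin (t*β) - t*Real.sin β)^2 := by
      rw [show -t*β = -(t*β) by ring, Real.sin_neg]; ring
    rw [e1, e2] at hK
    exact hK

/-- Core inequality, `r ∈ [0,1]` form. -/
lemma aux_K3 (β r : ℝ) (hβ0 : 0 ≤ β) (hβ : β ≤ π/2) (hr0 : 0 ≤ r) (hr1 : r ≤ 1) :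
    (Real.cos (2*r*β) - ((1-r) + r*Real.cos (2*β)))^2
      + (Real.sin (2*r*β) - r*Real.sin (2*β))^2 ≤ (1 - Real.cos β)^2 := by
  have hK := aux_K2 β (2*r-1) hβ0 hβ (by rw [abs_le]; constructor <;> linarith)
  refine le_trans (le_of_eq ?_) hK
  have h2rβ : 2*r*β = (2*r-1)*β + β := by ring
  have h2β : 2*β = β + β := by ring
  rw [h2rβ, h2β, Real.cos_add, Real.sin_add, Real.cos_add, Real.sin_add]
  set a := Real.cos ((2*r-1)*β)
  set b := Real.sin ((2*r-1)*β)
  set c := Real.cos β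
  set s := Real.sin β
  have h1 : b^2 + a^2 = 1 := Real.sin_sq_add_cos_sq ((2*r-1)*β)
  have h2 : s^2 + c^2 = 1 := Real.sin_sq_add_cos_sq β
  set t := 2*r-1 with htdef
  have hr : r = (t+1)/2 := by rw [htdef]; ring
  rw [hr]
  linear_combination (s^2 + c^2 - 1) * h1 +
    (3/4 + t/2 - t^2/4 + s^2/4 + s^2*t/2 + s^2*t^2/4 + c^2/4 + c^2*t/2 + c^2*t^2/4
      - b*s*(1+t) - a*c*(1+t)) * h2

lemma phase_add (x y : ℝ) : phase (x + y) = phase x * phase y := by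
  unfold phase
  rw [← Complex.exp_add]
  congr 1
  push_cast
  ring

lemma phase_eq (x : ℝ) : phase x = Complex.exp ((2*π*x : ℝ) * Complex.I) := by
  unfold phase
  congr 1
  push_cast
  ring

lemma abs_phase (x : ℝ) : ‖phase x‖ = 1 := by
  rw [phase_eq, Complex.norm_exp]
  simp

theorem randomized_rounding_of_phases :
    (∀ (θ : ℝ) (b : ℕ), 1 ≤ b →
      ((1 - rfrac θ b) * phi0 θ b +
          rfrac θ b * (phi0 θ b + (2 : ℝ) ^ (-(b : ℤ))) = θ) ∧
      ‖phase θ - expPhase θ b‖ ≤ 1 - Real.cos (Real.pi * (2 : ℝ) ^ (-(b : ℤ))) ∧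
      1 - Real.cos (Real.pi * (2 : ℝ) ^ (-(b : ℤ))) ≤
        Real.pi ^ 2 * (2 : ℝ) ^ (-(2 * (b : ℤ) + 1))) ∧
    (∀ (θ : ℝ) (ε : ℝ), 0 < ε → ε ≤ Real.pi ^ 2 / 8 →
      ‖phase θ -
          expPhase θ ⌈(1 / 2 : ℝ) * Real.logb 2 (Real.pi ^ 2 / (2 * ε))⌉₊‖ ≤ ε) := by
  have hπ := Real.pi_pos
  have main : ∀ (θ : ℝ) (b : ℕ), 1 ≤ b →
      ((1 - rfrac θ b) * phi0 θ b +
          rfrac θ b * (phi0 θ b + (2 : ℝ) ^ (-(b : ℤ))) = θ) ∧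
      ‖phase θ - expPhase θ b‖ ≤ 1 - Real.cos (Real.pi * (2 : ℝ) ^ (-(b : ℤ))) ∧
      1 - Real.cos (Real.pi * (2 : ℝ) ^ (-(b : ℤ))) ≤
        Real.pi ^ 2 * (2 : ℝ) ^ (-(2 * (b : ℤ) + 1)) := by
    intro θ b hb
    have hδpos : (0:ℝ) < (2:ℝ) ^ (-(b : ℤ)) := by positivity
    have hprod : (2:ℝ) ^ b * (2:ℝ) ^ (-(b : ℤ)) = 1 := by
      rw [← zpow_natCast (2:ℝ) b, ← zpow_add₀ (by norm_num : (2:ℝ) ≠ 0)]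
      simp
    have hunb : (1 - rfrac θ b) * phi0 θ b +
        rfrac θ b * (phi0 θ b + (2 : ℝ) ^ (-(b : ℤ))) = θ := by
      simp only [phi0, rfrac]
      linear_combination θ * hprod
    have hδhalf : (2:ℝ) ^ (-(b : ℤ)) ≤ 1/2 := by
      have h := zpow_le_zpow_right₀ (by norm_num : (1:ℝ) ≤ 2)
        (by omega : -(b:ℤ) ≤ -1)
      simpa using h
    have hr0 : 0 ≤ rfrac θ b := by
      simp only [rfrac]
      exact sub_nonneg.2 (Int.floor_le _)
    have hr1 : rfrac θ b ≤ 1 := by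
      simp only [rfrac]
      have := Int.lt_floor_add_one ((2:ℝ)^b * θ)
      push_cast
      linarith
    refine ⟨hunb, ?_, ?_⟩
    · -- the bound by 1 - cos(π 2^{-b})
      have hθeq : phi0 θ b + rfrac θ b * (2:ℝ) ^ (-(b : ℤ)) = θ := by
        linear_combination hunb
      have hdiff : phase θ - expPhase θ b =
          phase (phi0 θ b) * (phase (rfrac θ b * (2:ℝ) ^ (-(b : ℤ))) -
            (((1 - rfrac θ b : ℝ) : ℂ) + ((rfrac θ b : ℝ) : ℂ) *
              phase ((2:ℝ) ^ (-(b : ℤ))))) := by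
        have hphase : phase θ = phase (phi0 θ b) * phase (rfrac θ b * (2:ℝ) ^ (-(b : ℤ))) := by
          conv_lhs => rw [← hθeq]
          rw [phase_add]
        rw [hphase]
        unfold expPhase
        rw [phase_add]
        push_cast
        ring
      rw [hdiff, norm_mul, abs_phase, one_mul]
      set r := rfrac θ b with hrdef
      set δ := (2:ℝ) ^ (-(b : ℤ)) with hδdef
      set w := phase (r * δ) - (((1 - r : ℝ) : ℂ) + ((r : ℝ) : ℂ) * phase δ) with hwdef
      have hre : w.re = Real.cos (2*π*(r*δ)) - ((1-r) + r * Real.cos (2*π*δ)) := by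
        rw [hwdef, phase_eq, phase_eq, Complex.sub_re, Complex.add_re,
          Complex.re_ofReal_mul, Complex.exp_ofReal_mul_I_re, Complex.exp_ofReal_mul_I_re,
          Complex.ofReal_re]
      have him : w.im = Real.sin (2*π*(r*δ)) - r * Real.sin (2*π*δ) := by
        rw [hwdef, phase_eq, phase_eq, Complex.sub_im, Complex.add_im,
          Complex.im_ofReal_mul, Complex.exp_ofReal_mul_I_im, Complex.exp_ofReal_mul_I_im,
          Complex.ofReal_im]
        ring
      have habs2 : ‖w‖ ^ 2 =
          (Real.cos (2*r*(π*δ)) - ((1-r) + r * Real.cos (2*(π*δ))))^2 +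
          (Real.sin (2*r*(π*δ)) - r * Real.sin (2*(π*δ)))^2 := by
        rw [Complex.sq_norm, Complex.normSq_apply, hre, him,
          show 2*π*(r*δ) = 2*r*(π*δ) by ring, show 2*π*δ = 2*(π*δ) by ring]
        ring
      have hK := aux_K3 (π*δ) r (by positivity) (by nlinarith) hr0 hr1
      have hcos1 : Real.cos (π*δ) ≤ 1 := Real.cos_le_one _
      nlinarith [habs2, hK, norm_nonneg w]
    · -- 1 - cos(π δ) ≤ π² 2^{-(2b+1)}
      set δ := (2:ℝ) ^ (-(b : ℤ)) with hδdef
      have hhalf : Real.cos (π*δ) = 1 - 2 * Real.sin (π*δ/2)^2 := by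
        have h := Real.cos_two_mul' (π*δ/2)
        rw [show 2*(π*δ/2) = π*δ by ring] at h
        rw [h]
        linear_combination Real.sin_sq_add_cos_sq (π*δ/2)
      have hδ1 : δ ≤ 1 := by
        have h := zpow_le_zpow_right₀ (by norm_num : (1:ℝ) ≤ 2)
          (by omega : -(b:ℤ) ≤ 0)
        simpa [hδdef] using h
      have hδpos : (0:ℝ) < δ := by rw [hδdef]; positivity
      have hs0 : 0 ≤ Real.sin (π*δ/2) := by
        apply Real.sin_nonneg_of_nonneg_of_le_pi (by positivity)
        nlinarith
      have hsle : Real.sin (π*δ/2) ≤ π*δ/2 := Real.sin_le (by positivity)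
      have hssq : Real.sin (π*δ/2)^2 ≤ (π*δ/2)^2 := pow_le_pow_left₀ hs0 hsle 2
      have hδsq : (2:ℝ) ^ (-(2 * (b:ℤ) + 1)) = δ^2 / 2 := by
        rw [show -(2 * (b:ℤ) + 1) = (-(b:ℤ)) + ((-(b:ℤ)) + (-1)) by ring,
          zpow_add₀ (by norm_num : (2:ℝ) ≠ 0), zpow_add₀ (by norm_num : (2:ℝ) ≠ 0)]
        rw [hδdef]
        norm_num
        ring
      rw [hδsq, hhalf]
      nlinarith
  refine ⟨main, ?_⟩
  intro θ ε hε hε8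
  have hX0 : (0:ℝ) < π^2/(2*ε) := by positivity
  have hX4 : (4:ℝ) ≤ π^2/(2*ε) := by
    rw [le_div_iff₀ (by positivity)]
    nlinarith
  have hlog : 0 < Real.logb 2 (π^2/(2*ε)) := Real.logb_pos (by norm_num) (by linarith)
  have hz0 : 0 < (1/2 : ℝ) * Real.logb 2 (π^2/(2*ε)) := by linarith
  set b := ⌈(1/2 : ℝ) * Real.logb 2 (π^2/(2*ε))⌉₊ with hbdef
  have hb1 : 1 ≤ b := Nat.one_le_ceil_iff.2 hz0
  obtain ⟨h1, h2, h3⟩ := main θ b hb1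
  have hzb : (1/2 : ℝ) * Real.logb 2 (π^2/(2*ε)) ≤ (b:ℝ) := Nat.le_ceil _
  have hlogb : Real.logb 2 (π^2/(2*ε)) ≤ 2*(b:ℝ) := by linarith
  have hXle : π^2/(2*ε) ≤ (2:ℝ) ^ (2*(b:ℝ)) :=
    (Real.logb_le_iff_le_rpow (by norm_num : (1:ℝ) < 2) hX0).1 hlogb
  have hrpow : (2:ℝ) ^ (2*(b:ℝ)) = (2:ℝ) ^ (2*b : ℕ) := by
    rw [show (2*(b:ℝ)) = ((2*b : ℕ) : ℝ) by push_cast; ring, Real.rpow_natCast]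
  rw [hrpow] at hXle
  have hP : (0:ℝ) < (2:ℝ) ^ (2*b : ℕ) := by positivity
  have hπ2 : π^2 ≤ 2*ε * (2:ℝ) ^ (2*b : ℕ) := by
    rw [div_le_iff₀ (by positivity)] at hXle
    linarith
  have hz1 : (2:ℝ) ^ (-(2 * (b:ℤ) + 1)) = 1 / ((2:ℝ) ^ (2*b : ℕ) * 2) := by
    rw [← zpow_natCast (2:ℝ) (2*b), show ((2*b : ℕ) : ℤ) = 2*(b:ℤ) by push_cast; ring,
      eq_div_iff (by positivity), ← mul_assoc, ← zpow_add₀ (by norm_num : (2:ℝ) ≠ 0),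
      show -(2 * (b:ℤ) + 1) + 2*(b:ℤ) = -1 by ring]
    norm_num
  have hfinal : π^2 * (2:ℝ) ^ (-(2 * (b:ℤ) + 1)) ≤ ε := by
    rw [hz1, mul_one_div, div_le_iff₀ (by positivity)]
    nlinarith
  calc ‖phase θ - expPhase θ b‖
      ≤ 1 - Real.cos (π * (2:ℝ) ^ (-(b:ℤ))) := h2
    _ ≤ π^2 * (2:ℝ) ^ (-(2 * (b:ℤ) + 1)) := h3
    _ ≤ ε := hfinal
end
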